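/- Let p ∈ (1, 2), C < ∞ and q > 1/p. Let Y_1, Y_2, … be independent, identically distributed real random variables with E|Y_1| < ∞ and sup_{t ≥ 1} t^p · P(|Y_1| > t) ≤ C, and let (M_n) be a sequence with M_n ≥ n^q for all n. Then n^{-1/p} ∑_{i=1}^n ( Y_i · 1_{|Y_i| ≥ M_n} − E[ Y_1 · 1_{|Y_1| ≥ M_n} ] ) → 0 in probability as n → ∞. -/

import Mathlib

open MeasureTheory ProbabilityTheory Filter Topology Set ENNReal

lemma aux_moment_lt_top {Ω : Type*} [MeasurableSpace Ω] (P : Measure Ω) [IsProbabilityMeasure P]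
    {p C r : ℝ} (f : Ω → ℝ) (hf : Measurable f) (hC : 0 ≤ C)
    (htail : ∀ t : ℝ, 1 ≤ t → t ^ p * (P {ω | |f ω| > t}).toReal ≤ C)
    (hr1 : 1 < r) (hrp : r < p) :
    ∫⁻ ω, ENNReal.ofReal (|f ω| ^ r) ∂P < ⊤ := by
  have hr0 : (0:ℝ) < r := by linarith
  rw [lintegral_rpow_eq_lintegral_meas_lt_mul P
      (Filter.Eventually.of_forall fun ω => abs_nonneg _) hf.abs.aemeasurable hr0]
  refine ENNReal.mul_lt_top ENNReal.ofReal_lt_top ?_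
  have hsplit : Ioi (0:ℝ) = Ioc 0 1 ∪ Ioi 1 := (Ioc_union_Ioi_eq_Ioi zero_le_one).symm
  rw [hsplit, lintegral_union measurableSet_Ioi (Ioc_disjoint_Ioi le_rfl)]
  refine ENNReal.add_lt_top.mpr ⟨?_, ?_⟩
  · calc ∫⁻ t in Ioc (0:ℝ) 1, P {a | t < |f a|} * ENNReal.ofReal (t ^ (r - 1))
        ≤ ∫⁻ _ in Ioc (0:ℝ) 1, 1 := by
          refine setLIntegral_mono measurable_one fun t ht => ?_
          refine mul_le_one' prob_le_one ?_
          exact ENNReal.ofReal_le_one.mpr (Real.rpow_le_one ht.1.le ht.2 (by linarith))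
      _ < ⊤ := by simp [Real.volume_Ioc]
  · have hintg : IntegrableOn (fun t : ℝ => C * t ^ (r - 1 - p)) (Ioi 1) :=
      (integrableOn_Ioi_rpow_of_lt (by linarith) one_pos).const_mul C
    calc ∫⁻ t in Ioi (1:ℝ), P {a | t < |f a|} * ENNReal.ofReal (t ^ (r - 1))
        ≤ ∫⁻ t in Ioi (1:ℝ), ENNReal.ofReal (C * t ^ (r - 1 - p)) := by
          refine setLIntegral_mono (by fun_prop) fun t ht => ?_
          have ht1 : (1:ℝ) < t := ht
          have ht0 : (0:ℝ) < t := by linarith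
          have htp : (0:ℝ) < t ^ p := Real.rpow_pos_of_pos ht0 p
          have h1 : (P {a | t < |f a|}).toReal ≤ C * t ^ (-p) := by
            have h := htail t ht1.le
            rw [Real.rpow_neg ht0.le, mul_comm C, ← div_eq_inv_mul, le_div_iff₀ htp]
            linarith
          calc P {a | t < |f a|} * ENNReal.ofReal (t ^ (r - 1))
              ≤ ENNReal.ofReal (C * t ^ (-p)) * ENNReal.ofReal (t ^ (r - 1)) := by
                gcongr
                rw [← ENNReal.ofReal_toReal (measure_ne_top P _)]
                exact ENNReal.ofReal_le_ofReal h1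
            _ = ENNReal.ofReal (C * t ^ (-p) * t ^ (r - 1)) :=
                (ENNReal.ofReal_mul (by positivity)).symm
            _ = ENNReal.ofReal (C * t ^ (r - 1 - p)) := by
                rw [mul_assoc, ← Real.rpow_add ht0,
                  show -p + (r - 1) = r - 1 - p by ring]
      _ < ⊤ := hintg.lintegral_lt_top

/-- negligibility of the truncated-away part; Theorem C(ii).
For i.i.d. integrable `Y i` with tail `t^p P(|Y| > t) ≤ C` (`p ∈ (1,2)`) and
`M n ≥ n^q` with `q > 1/p`, one has
`n^{-1/p} ∑_{i<n} (Y i · 1_{|Y i| ≥ M n} − E[Y · 1_{|Y| ≥ M n}]) → 0` in probability. -/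
theorem stmt_11 {Ω : Type*} [MeasurableSpace Ω] (P : Measure Ω) [IsProbabilityMeasure P]
    (p q C : ℝ) (hp : p ∈ Set.Ioo (1 : ℝ) 2) (hq : 1 / p < q)
    (Y : ℕ → Ω → ℝ)
    (hmeas : ∀ i, Measurable (Y i))
    (hint : Integrable (Y 0) P)
    (hindep : iIndepFun Y P)
    (hident : ∀ i, IdentDistrib (Y i) (Y 0) P P)
    (htail : ∀ t : ℝ, 1 ≤ t → t ^ p * (P {ω | |Y 0 ω| > t}).toReal ≤ C)
    (M : ℕ → ℝ) (hM : ∀ n : ℕ, (n : ℝ) ^ q ≤ M n) :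
    TendstoInMeasure P
      (fun (n : ℕ) ω => ((n : ℝ) ^ (1 / p))⁻¹ *
        ∑ i ∈ Finset.range n,
          ((if M n ≤ |Y i ω| then Y i ω else 0)
            - ∫ ω', (if M n ≤ |Y 0 ω'| then Y 0 ω' else 0) ∂P))
      atTop (fun _ => 0) := by
  obtain ⟨hp1, hp2⟩ := hp
  have hp0 : (0:ℝ) < p := by linarith
  have hq0 : (0:ℝ) < q := lt_trans (by positivity) hq
  have hC : 0 ≤ C := by
    have h := htail 1 le_rfl
    have h0 : (0:ℝ) ≤ 1 ^ p * (P {ω | |Y 0 ω| > 1}).toReal := by positivity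
    linarith
  have hpq : 1 < q * p := (div_lt_iff₀ hp0).mp hq
  set d : ℝ := (p - 1) / (p * q) with hd_def
  have hd0 : 0 < d := div_pos (by linarith) (by positivity)
  have hd1 : d < p - 1 := div_lt_self (by linarith) (by nlinarith)
  have hqd : q * d = (p - 1) / p := by rw [hd_def]; field_simp
  set r : ℝ := (1 + d + p) / 2 with hr_def
  have hr1 : 1 < r := by rw [hr_def]; linarith
  have hrp : r < p := by rw [hr_def]; linarith
  set e : ℝ := -(1/p) + 1 + q * (1 - r) with he_def
  have he : e < 0 := by
    have h1 : q * (1 - r) = -(q * d) / 2 - q * (p - 1) / 2 := by rw [hr_def]; ring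
    have h2 : (p - 1) / p < q * (p - 1) := by
      rw [div_lt_iff₀ hp0]; nlinarith
    have h3 : (1:ℝ) - 1/p = (p-1)/p := by field_simp
    rw [he_def]; linarith
  have hK := aux_moment_lt_top P (Y 0) (hmeas 0) hC htail hr1 hrp
  set K := ∫⁻ ω, ENNReal.ofReal (|Y 0 ω| ^ r) ∂P with hK_def
  -- measurability of truncations
  have hgmeas : ∀ n : ℕ, Measurable (fun x : ℝ => if M n ≤ |x| then x else 0) := fun n =>
    Measurable.ite (measurableSet_le measurable_const measurable_abs) measurable_id
      measurable_const
  have hTmeas : ∀ n i, Measurable (fun ω => if M n ≤ |Y i ω| then Y i ω else 0) := fun n i =>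
    (hgmeas n).comp (hmeas i)
  have hXint : ∀ n, Integrable (fun ω => if M n ≤ |Y 0 ω| then Y 0 ω else 0) P := fun n => by
    refine hint.abs.mono' (hTmeas n 0).aestronglyMeasurable ?_
    refine Filter.Eventually.of_forall fun ω => ?_
    simp only [Real.norm_eq_abs]
    split
    · exact le_rfl
    · simp [abs_nonneg]
  set L : ℕ → ℝ≥0∞ :=
    fun n => ∫⁻ ω, ENNReal.ofReal |if M n ≤ |Y 0 ω| then Y 0 ω else 0| ∂P with hL_def
  have hLid : ∀ n i,
      ∫⁻ ω, ENNReal.ofReal |if M n ≤ |Y i ω| then Y i ω else 0| ∂P = L n := fun n i => by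
    have hid : IdentDistrib (fun ω => ENNReal.ofReal |if M n ≤ |Y i ω| then Y i ω else 0|)
        (fun ω => ENNReal.ofReal |if M n ≤ |Y 0 ω| then Y 0 ω else 0|) P P :=
      (hident i).comp ((hgmeas n).abs.ennreal_ofReal)
    exact hid.lintegral_eq
  set m : ℕ → ℝ := fun n => ∫ ω', (if M n ≤ |Y 0 ω'| then Y 0 ω' else 0) ∂P with hm_def
  have hm_le : ∀ n, ENNReal.ofReal |m n| ≤ L n := fun n => by
    have h1 : |m n| ≤ ∫ ω, |if M n ≤ |Y 0 ω| then Y 0 ω else 0| ∂P := by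
      calc |m n| = ‖∫ ω', (if M n ≤ |Y 0 ω'| then Y 0 ω' else 0) ∂P‖ := (Real.norm_eq_abs _).symm
        _ ≤ ∫ ω', ‖if M n ≤ |Y 0 ω'| then Y 0 ω' else 0‖ ∂P := norm_integral_le_integral_norm _
        _ = ∫ ω, |if M n ≤ |Y 0 ω| then Y 0 ω else 0| ∂P := by
            simp only [Real.norm_eq_abs]
    exact le_trans (ENNReal.ofReal_le_ofReal h1)
      (ofReal_integral_eq_lintegral_ofReal (hXint n).abs
        (Filter.Eventually.of_forall fun ω => abs_nonneg _)).le
  rw [tendstoInMeasure_iff_dist]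
  intro ε hε
  have hεne : ENNReal.ofReal ε ≠ 0 := (ENNReal.ofReal_pos.mpr hε).ne'
  -- the key quantitative bound
  have key : ∀ n : ℕ, 1 ≤ n →
      P {x | ε ≤ dist (((n : ℝ) ^ (1 / p))⁻¹ *
        ∑ i ∈ Finset.range n, ((if M n ≤ |Y i x| then Y i x else 0) - m n)) 0}
      ≤ (ENNReal.ofReal ε)⁻¹ * (2 * K * ENNReal.ofReal ((n:ℝ) ^ e)) := by
    intro n hn
    have hn1 : (1:ℝ) ≤ (n:ℝ) := by exact_mod_cast hn
    have hn0 : (0:ℝ) < (n:ℝ) := by linarith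
    have hMn : (1:ℝ) ≤ M n := le_trans (Real.one_le_rpow hn1 hq0.le) (hM n)
    have hMn0 : (0:ℝ) < M n := by linarith
    set c : ℝ := ((n : ℝ) ^ (1 / p))⁻¹ with hc_def
    have hc0 : 0 ≤ c := by positivity
    set Z : Ω → ℝ := fun x => c *
        ∑ i ∈ Finset.range n, ((if M n ≤ |Y i x| then Y i x else 0) - m n) with hZ_def
    have hZmeas : Measurable Z :=
      (Finset.measurable_sum _ fun i _ => (hTmeas n i).sub measurable_const).const_mul c
    -- pointwise truncation bound
    have hpt : ∀ x : ℝ, |if M n ≤ |x| then x else 0| ≤ M n ^ (1 - r) * |x| ^ r := by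
      intro x
      by_cases hx : M n ≤ |x|
      · rw [if_pos hx]
        have hx0 : (0:ℝ) < |x| := lt_of_lt_of_le hMn0 hx
        have h1 : M n ^ (1 - r) * M n ^ (r - 1) = 1 := by
          rw [← Real.rpow_add hMn0]; norm_num
        have h2 : M n ^ (r - 1) ≤ |x| ^ (r - 1) := Real.rpow_le_rpow hMn0.le hx (by linarith)
        have h3 : |x| ^ r = |x| ^ (r - 1) * |x| := by
          rw [← Real.rpow_add_one hx0.ne' (r - 1)]; norm_num
        have h4 : (0:ℝ) < M n ^ (1 - r) := Real.rpow_pos_of_pos hMn0 _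
        calc |x| = (M n ^ (1 - r) * M n ^ (r - 1)) * |x| := by rw [h1, one_mul]
          _ ≤ (M n ^ (1 - r) * |x| ^ (r - 1)) * |x| := by
              refine mul_le_mul_of_nonneg_right ?_ (abs_nonneg x)
              exact mul_le_mul_of_nonneg_left h2 h4.le
          _ = M n ^ (1 - r) * |x| ^ r := by rw [h3]; ring
      · rw [if_neg hx, abs_zero]; positivity
    have hLle : L n ≤ ENNReal.ofReal (M n ^ (1 - r)) * K := by
      calc L n ≤ ∫⁻ ω, ENNReal.ofReal (M n ^ (1 - r)) * ENNReal.ofReal (|Y 0 ω| ^ r) ∂P := by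
            refine lintegral_mono fun ω => ?_
            rw [← ENNReal.ofReal_mul (by positivity)]
            exact ENNReal.ofReal_le_ofReal (hpt (Y 0 ω))
        _ = ENNReal.ofReal (M n ^ (1 - r)) * K :=
            lintegral_const_mul' _ _ ENNReal.ofReal_ne_top
    -- bound the lintegral of |Z|
    set S : Ω → ℝ := fun ω => ∑ i ∈ Finset.range n,
        ((if M n ≤ |Y i ω| then Y i ω else 0) - m n) with hS_def
    have hZint : ∫⁻ ω, ENNReal.ofReal |Z ω| ∂P
        ≤ ENNReal.ofReal c * ((n : ℝ≥0∞) * (2 * L n)) := by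
      have hstep1 : ∀ ω, ENNReal.ofReal |Z ω| = ENNReal.ofReal c * ENNReal.ofReal |S ω| := by
        intro ω
        rw [hZ_def]
        simp only [abs_mul, abs_of_nonneg hc0, ENNReal.ofReal_mul hc0]
        rfl
      have hstep2 : ∀ ω, ENNReal.ofReal |S ω| ≤ ∑ i ∈ Finset.range n,
            (ENNReal.ofReal |if M n ≤ |Y i ω| then Y i ω else 0| + ENNReal.ofReal |m n|) := by
        intro ω
        calc ENNReal.ofReal |S ω|
            ≤ ENNReal.ofReal (∑ i ∈ Finset.range n,
              (|if M n ≤ |Y i ω| then Y i ω else 0| + |m n|)) := by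
              refine ENNReal.ofReal_le_ofReal ?_
              refine le_trans (Finset.abs_sum_le_sum_abs _ _) ?_
              exact Finset.sum_le_sum fun i _ => abs_sub _ _
          _ = _ := by
              rw [ENNReal.ofReal_sum_of_nonneg fun i _ => by positivity]
              refine Finset.sum_congr rfl fun i _ => ?_
              rw [ENNReal.ofReal_add (abs_nonneg _) (abs_nonneg _)]
      calc ∫⁻ ω, ENNReal.ofReal |Z ω| ∂P
          = ENNReal.ofReal c * (∫⁻ ω, ENNReal.ofReal |S ω| ∂P) := by
            simp_rw [hstep1]
            exact lintegral_const_mul' _ _ ENNReal.ofReal_ne_top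
        _ ≤ ENNReal.ofReal c * ((n : ℝ≥0∞) * (2 * L n)) := by
            refine mul_le_mul_right ?_ _
            calc (∫⁻ ω, ENNReal.ofReal |S ω| ∂P)
                ≤ ∫⁻ ω, ∑ i ∈ Finset.range n,
                  (ENNReal.ofReal |if M n ≤ |Y i ω| then Y i ω else 0|
                    + ENNReal.ofReal |m n|) ∂P := lintegral_mono hstep2
              _ = ∑ i ∈ Finset.range n, (∫⁻ ω,
                  (ENNReal.ofReal |if M n ≤ |Y i ω| then Y i ω else 0|
                    + ENNReal.ofReal |m n|) ∂P) := by
                  refine lintegral_finset_sum _ fun i _ => ?_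
                  exact ((hTmeas n i).abs.ennreal_ofReal).add measurable_const
              _ = ∑ i ∈ Finset.range n, (L n + ENNReal.ofReal |m n|) := by
                  refine Finset.sum_congr rfl fun i _ => ?_
                  rw [lintegral_add_right _ measurable_const, lintegral_const, measure_univ,
                    mul_one, hLid n i]
              _ ≤ ∑ i ∈ Finset.range n, (2 * L n) := by
                  refine Finset.sum_le_sum fun i _ => ?_
                  rw [two_mul]
                  exact add_le_add_right (hm_le n) _
              _ = (n : ℝ≥0∞) * (2 * L n) := by
                  rw [Finset.sum_const, Finset.card_range, nsmul_eq_mul]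
    -- arithmetic: combine into the rate n^e
    have hrate : ENNReal.ofReal c * ((n : ℝ≥0∞) * (2 * (ENNReal.ofReal (M n ^ (1 - r)) * K)))
        ≤ 2 * K * ENNReal.ofReal ((n:ℝ) ^ e) := by
      have hreal : c * (n : ℝ) * M n ^ (1 - r) ≤ (n:ℝ) ^ e := by
        have hble : M n ^ (1 - r) ≤ ((n:ℝ) ^ q) ^ (1 - r) :=
          Real.rpow_le_rpow_of_nonpos (Real.rpow_pos_of_pos hn0 q) (hM n) (by linarith)
        have hcn0 : 0 ≤ c * (n : ℝ) := by positivity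
        calc c * (n : ℝ) * M n ^ (1 - r) ≤ c * (n : ℝ) * ((n:ℝ) ^ q) ^ (1 - r) :=
            mul_le_mul_of_nonneg_left hble hcn0
          _ = (n:ℝ) ^ e := by
            have h4 : ((n:ℝ) ^ (1/p))⁻¹ = (n:ℝ) ^ (-(1/p)) := (Real.rpow_neg hn0.le _).symm
            have h5 : ((n:ℝ) ^ q) ^ (1-r) = (n:ℝ) ^ (q*(1-r)) := (Real.rpow_mul hn0.le _ _).symm
            rw [hc_def, h4, h5, ← Real.rpow_add_one hn0.ne', ← Real.rpow_add hn0, he_def]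
      calc ENNReal.ofReal c * ((n : ℝ≥0∞) * (2 * (ENNReal.ofReal (M n ^ (1 - r)) * K)))
          = 2 * K * ENNReal.ofReal (c * (n:ℝ) * M n ^ (1 - r)) := by
            rw [ENNReal.ofReal_mul (by positivity : (0:ℝ) ≤ c * (n:ℝ)),
              ENNReal.ofReal_mul hc0, ENNReal.ofReal_natCast]
            ring
        _ ≤ 2 * K * ENNReal.ofReal ((n:ℝ) ^ e) := by
            exact mul_le_mul_right (ENNReal.ofReal_le_ofReal hreal) _
    -- Markov
    have hmark : P {x | ε ≤ dist (Z x) 0}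
        ≤ (ENNReal.ofReal ε)⁻¹ * (∫⁻ ω, ENNReal.ofReal |Z ω| ∂P) := by
      have h := mul_meas_ge_le_lintegral₀ (μ := P) (hZmeas.abs.ennreal_ofReal.aemeasurable)
        (ENNReal.ofReal ε)
      have hset : {x | ENNReal.ofReal ε ≤ ENNReal.ofReal |Z x|} = {x | ε ≤ dist (Z x) 0} := by
        ext x
        simp [dist_zero_right, Real.norm_eq_abs,
          ENNReal.ofReal_le_ofReal_iff (abs_nonneg (Z x))]
      rw [hset] at h
      rw [← ENNReal.div_eq_inv_mul]
      rw [ENNReal.le_div_iff_mul_le (Or.inl hεne) (Or.inl ENNReal.ofReal_ne_top)]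
      rwa [mul_comm]
    calc P {x | ε ≤ dist (Z x) 0}
        ≤ (ENNReal.ofReal ε)⁻¹ * (∫⁻ ω, ENNReal.ofReal |Z ω| ∂P) := hmark
      _ ≤ (ENNReal.ofReal ε)⁻¹ * (2 * K * ENNReal.ofReal ((n:ℝ) ^ e)) := by
          refine mul_le_mul_right ?_ _
          refine le_trans hZint (le_trans ?_ hrate)
          refine mul_le_mul_right (mul_le_mul_right (mul_le_mul_right hLle _) _) _
  -- limit of the bound
  have hB : Tendsto (fun n : ℕ => (ENNReal.ofReal ε)⁻¹ * (2 * K * ENNReal.ofReal ((n:ℝ) ^ e)))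
      atTop (𝓝 0) := by
    have h1 : Tendsto (fun n : ℕ => (n:ℝ) ^ e) atTop (𝓝 0) := by
      have h := (tendsto_rpow_neg_atTop (show (0:ℝ) < -e by linarith)).comp
        tendsto_natCast_atTop_atTop (α := ℕ)
      simpa [Function.comp_def] using h
    have h2 : Tendsto (fun n : ℕ => ENNReal.ofReal ((n:ℝ) ^ e)) atTop (𝓝 0) := by
      rw [show (0 : ℝ≥0∞) = ENNReal.ofReal 0 by simp]
      exact (ENNReal.continuous_ofReal.tendsto _).comp h1
    have hc : (ENNReal.ofReal ε)⁻¹ * (2 * K) ≠ ⊤ := by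
      refine ENNReal.mul_ne_top ?_ (ENNReal.mul_ne_top (by simp) hK.ne)
      simp [ENNReal.inv_ne_top, hεne]
    have h3 := ENNReal.Tendsto.const_mul h2 (Or.inr hc)
    simpa [mul_assoc] using h3
  refine tendsto_of_tendsto_of_tendsto_of_le_of_le' tendsto_const_nhds hB
    (Filter.Eventually.of_forall fun n => zero_le) ?_
  exact Filter.eventually_atTop.mpr ⟨1, key⟩
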